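/- Let TA be a timed automaton. Then the reachable subsystems of TS(TA) and TS(PUR(TA)) are isomorphic: there is a bijection g from the reachable states of TS(TA) onto the reachable states of TS(PUR(TA)) such that g maps the initial states of TS(TA) exactly onto the initial states of TS(PUR(TA)), and for all reachable states q, q' and every label α ∈ Σ ∪ ℝ≥0, q →α q' in TS(TA) if and only if g(q) →α g(q') in TS(PUR(TA)). -/

import Mathlib

/-!
Framework for timed automata.  Clock valuations assign non-negative reals to
clocks.  Guards and location invariants are represented semantically, as
predicates on clock valuations.
-/

/-- Clock valuations: each clock gets a non-negative real. -/
abbrev Val (C : Type) := C → NNReal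

/-- The valuation `ν₀` assigning `0` to every clock. -/
def zeroVal {C : Type} : Val C := fun _ => 0

open Classical in
/-- `ν[λ := 0]`: reset the clocks in `lam` to zero. -/
noncomputable def resetVal {C : Type} (ν : Val C) (lam : Set C) : Val C :=
  fun x => if x ∈ lam then 0 else ν x

/-- `ν + δ`: advance every clock by `δ`. -/
def shift {C : Type} (ν : Val C) (δ : NNReal) : Val C := fun x => ν x + δ

/-- A timed automaton `TA = (L, L₀, L_u, Σ, CX, I, E)` with location type `L`,
action alphabet `A` and clock type `C`:  a set of initial locations (nonempty),
a set of urgent locations, an invariant map, and a set of edges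
`(l, a, φ, λ, l')` consisting of source, action, guard, reset set and target. -/
structure TA (L A C : Type) where
  init : Set L
  init_nonempty : init.Nonempty
  urgent : Set L
  inv : L → Val C → Prop
  edges : Set (L × A × (Val C → Prop) × Set C × L)

/-- States of the associated transition systems: location/valuation pairs. -/
abbrev State (L C : Type) := L × Val C

/-- Initial states: initial locations paired with the zero valuation. -/
def TA.initStates {L A C : Type} (T : TA L A C) : Set (State L C) :=
  {p | p.1 ∈ T.init ∧ p.2 = zeroVal}

/-- Baseline semantics `TS(TA)`.  Labels are `Sum.inl a` for actions `a ∈ Σ`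
and `Sum.inr δ` for delays `δ ∈ ℝ≥0`.  Action transitions require the target
invariant to hold; delay transitions require the source location not to be
urgent and the invariant to hold throughout the delay. -/
def TS {L A C : Type} (T : TA L A C) :
    State L C → (A ⊕ NNReal) → State L C → Prop := fun p α q =>
  match α with
  | Sum.inl a => ∃ φ lam, (p.1, a, φ, lam, q.1) ∈ T.edges ∧ φ p.2 ∧
      q.2 = resetVal p.2 lam ∧ T.inv q.1 q.2
  | Sum.inr δ => p.1 ∉ T.urgent ∧ q.1 = p.1 ∧ q.2 = shift p.2 δ ∧
      ∀ k ≤ δ, T.inv p.1 (shift p.2 k)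

/-- Unsatisfied-invariants semantics `TS'(TA)`: like `TS(TA)` except action
transitions do not require the target invariant to hold. -/
def TS' {L A C : Type} (T : TA L A C) :
    State L C → (A ⊕ NNReal) → State L C → Prop := fun p α q =>
  match α with
  | Sum.inl a => ∃ φ lam, (p.1, a, φ, lam, q.1) ∈ T.edges ∧ φ p.2 ∧
      q.2 = resetVal p.2 lam
  | Sum.inr δ => p.1 ∉ T.urgent ∧ q.1 = p.1 ∧ q.2 = shift p.2 δ ∧
      ∀ k ≤ δ, T.inv p.1 (shift p.2 k)

/-- Reachable states: smallest set containing the initial states and closed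
under the transition relation. -/
inductive Reachable {S Λ : Type} (init : Set S) (tr : S → Λ → S → Prop) : S → Prop
  | base {s : S} : s ∈ init → Reachable init tr s
  | step {s : S} {α : Λ} {s' : S} :
      Reachable init tr s → tr s α s' → Reachable init tr s'

/-- The construction `PUR(TA)`.  Locations are `L ⊕ L`: `Sum.inl l` is the
original location `l`, and `Sum.inr l` for `l ∈ L_B = {l ∈ L₀ | ν₀ ⊭ I(l)}`
plays the role of the fresh urgent copy `l_u ∈ F_u`.  Initial locations are
`(L₀ - L_B) ∪ F_u`, urgent locations are `L_u ∪ F_u`, the invariant of each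
fresh copy is `true`, and the edges are the original ones together with copies
`(l_u, a, φ, λ, l'')` of each edge `(l, a, φ, λ, l'')` with `l ∈ L_B`. -/
noncomputable def PUR {L A C : Type} (T : TA L A C) : TA (L ⊕ L) A C where
  init := Sum.inl '' {l | l ∈ T.init ∧ T.inv l zeroVal} ∪
          Sum.inr '' {l | l ∈ T.init ∧ ¬ T.inv l zeroVal}
  init_nonempty := by
    obtain ⟨l, hl⟩ := T.init_nonempty
    by_cases h : T.inv l zeroVal
    · exact ⟨Sum.inl l, Set.mem_union_left _ (Set.mem_image_of_mem _ ⟨hl, h⟩)⟩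
    · exact ⟨Sum.inr l, Set.mem_union_right _ (Set.mem_image_of_mem _ ⟨hl, h⟩)⟩
  urgent := Sum.inl '' T.urgent ∪ Sum.inr '' {l | l ∈ T.init ∧ ¬ T.inv l zeroVal}
  inv := fun l' ν =>
    match l' with
    | Sum.inl l => T.inv l ν
    | Sum.inr _ => True
  edges := { e | ∃ l a φ lam l', (l, a, φ, lam, l') ∈ T.edges ∧
      (e = (Sum.inl l, a, φ, lam, Sum.inl l') ∨
       (l ∈ T.init ∧ ¬ T.inv l zeroVal ∧ e = (Sum.inr l, a, φ, lam, Sum.inl l'))) }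

open Classical in
/-- The isomorphism: send `(l, ν₀)` with `l ∈ L_B` to the fresh copy, and
everything else to the original location. -/
noncomputable def gmap {L A C : Type} (T : TA L A C) (p : State L C) :
    State (L ⊕ L) C :=
  if (p.1 ∈ T.init ∧ ¬ T.inv p.1 zeroVal) ∧ p.2 = zeroVal
  then (Sum.inr p.1, p.2) else (Sum.inl p.1, p.2)

lemma gmap_cases {L A C : Type} (T : TA L A C) (p : State L C) :
    gmap T p = (Sum.inl p.1, p.2) ∨
    (gmap T p = (Sum.inr p.1, p.2) ∧ p.1 ∈ T.init ∧ ¬ T.inv p.1 zeroVal ∧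
      p.2 = zeroVal) := by
  unfold gmap; split_ifs with h
  · exact Or.inr ⟨rfl, h.1.1, h.1.2, h.2⟩
  · exact Or.inl rfl

lemma gmap_eq_inl {L A C : Type} (T : TA L A C) (p : State L C)
    (h : ¬ ((p.1 ∈ T.init ∧ ¬ T.inv p.1 zeroVal) ∧ p.2 = zeroVal)) :
    gmap T p = (Sum.inl p.1, p.2) := if_neg h

lemma gmap_of_inv {L A C : Type} (T : TA L A C) (p : State L C)
    (h : T.inv p.1 p.2) : gmap T p = (Sum.inl p.1, p.2) := by
  apply gmap_eq_inl
  rintro ⟨⟨_, hb⟩, hz⟩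
  rw [hz] at h
  exact hb h

lemma gmap_snd {L A C : Type} (T : TA L A C) (p : State L C) :
    (gmap T p).2 = p.2 := by
  unfold gmap; split_ifs <;> rfl

lemma gmap_fst_inl {L A C : Type} (T : TA L A C) (q : State L C) {l' : L}
    (h : (gmap T q).1 = Sum.inl l') : q.1 = l' := by
  rcases gmap_cases T q with h1 | ⟨h1, _⟩ <;> rw [h1] at h
  · exact Sum.inl.inj h
  · exact absurd h (by simp)

lemma gmap_injective {L A C : Type} (T : TA L A C) :
    Function.Injective (gmap T) := by
  intro p q h
  have h2 : p.2 = q.2 := by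
    have := congrArg Prod.snd h
    rwa [gmap_snd, gmap_snd] at this
  have h1 : p.1 = q.1 := by
    have hf := congrArg Prod.fst h
    rcases gmap_cases T p with hp | ⟨hp, _⟩ <;> rcases gmap_cases T q with hq | ⟨hq, _⟩ <;>
      rw [hp, hq] at hf <;> simp only [Sum.inl.injEq, Sum.inr.injEq, reduceCtorEq] at hf <;>
      exact hf
  exact Prod.ext_iff.mpr ⟨h1, h2⟩

lemma shift_zero {C : Type} (ν : Val C) : shift ν 0 = ν :=
  funext fun x => add_zero _

lemma inl_urgent_iff {L A C : Type} (T : TA L A C) (l : L) :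
    Sum.inl l ∈ (PUR T).urgent ↔ l ∈ T.urgent := by
  simp [PUR]

lemma inr_urgent {L A C : Type} (T : TA L A C) {l : L}
    (h1 : l ∈ T.init) (h2 : ¬ T.inv l zeroVal) :
    Sum.inr l ∈ (PUR T).urgent := by
  simp only [PUR, Set.mem_union, Set.mem_image, Set.mem_setOf_eq]
  exact Or.inr ⟨l, ⟨h1, h2⟩, rfl⟩

/-- Edge characterization: edges of `PUR T` with source `Sum.inl l`. -/
lemma edge_inl {L A C : Type} (T : TA L A C) {l : L} {a : A}
    {φ : Val C → Prop} {lam : Set C} {m : L ⊕ L}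
    (h : (Sum.inl l, a, φ, lam, m) ∈ (PUR T).edges) :
    ∃ l', m = Sum.inl l' ∧ (l, a, φ, lam, l') ∈ T.edges := by
  obtain ⟨l0, a0, φ0, lam0, l0', he, hc⟩ := h
  rcases hc with hc | ⟨_, _, hc⟩ <;>
    simp only [Prod.mk.injEq, Sum.inl.injEq, reduceCtorEq, false_and] at hc
  obtain ⟨rfl, rfl, rfl, rfl, rfl⟩ := hc
  exact ⟨l0', rfl, he⟩

/-- Edge characterization: edges of `PUR T` with source `Sum.inr l`. -/
lemma edge_inr {L A C : Type} (T : TA L A C) {l : L} {a : A}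
    {φ : Val C → Prop} {lam : Set C} {m : L ⊕ L}
    (h : (Sum.inr l, a, φ, lam, m) ∈ (PUR T).edges) :
    ∃ l', m = Sum.inl l' ∧ (l, a, φ, lam, l') ∈ T.edges := by
  obtain ⟨l0, a0, φ0, lam0, l0', he, hc⟩ := h
  rcases hc with hc | ⟨_, _, hc⟩ <;>
    simp only [Prod.mk.injEq, Sum.inr.injEq, reduceCtorEq, false_and] at hc
  obtain ⟨rfl, rfl, rfl, rfl, rfl⟩ := hc
  exact ⟨l0', rfl, he⟩

lemma trans_iff {L A C : Type} [Nonempty C] (T : TA L A C) (p q : State L C)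
    (α : A ⊕ NNReal) :
    TS T p α q ↔ TS (PUR T) (gmap T p) α (gmap T q) := by
  rcases gmap_cases T p with hp | ⟨hp, hpi, hpni, hpz⟩
  · cases α with
    | inl a =>
      constructor
      · rintro ⟨φ, lam, he, hg, hq2, hqi⟩
        rw [hp, gmap_of_inv T q hqi]
        exact ⟨φ, lam, ⟨p.1, a, φ, lam, q.1, he, Or.inl rfl⟩, hg, hq2, hqi⟩
      · rw [hp]
        rintro ⟨φ, lam, he, hg, hq2, hqi⟩
        obtain ⟨l', hm, he'⟩ := edge_inl T he
        have hq1 : q.1 = l' := gmap_fst_inl T q hm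
        rw [gmap_snd] at hq2
        rw [hm] at hqi
        rw [gmap_snd] at hqi
        exact ⟨φ, lam, hq1 ▸ he', hg, hq2, hq1 ▸ hqi⟩
    | inr δ =>
      constructor
      · rintro ⟨hu, hq1, hq2, hinv⟩
        have hqi : T.inv q.1 q.2 := by rw [hq1, hq2]; exact hinv δ le_rfl
        rw [hp, gmap_of_inv T q hqi]
        refine ⟨?_, by rw [hq1], hq2, fun k hk => hinv k hk⟩
        simpa [inl_urgent_iff] using hu
      · rw [hp]
        rintro ⟨hu, hq1, hq2, hinv⟩
        have hq1' : q.1 = p.1 := gmap_fst_inl T q hq1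
        rw [gmap_snd] at hq2
        refine ⟨by simpa [inl_urgent_iff] using hu, hq1', hq2, fun k hk => hinv k hk⟩
  · cases α with
    | inl a =>
      constructor
      · rintro ⟨φ, lam, he, hg, hq2, hqi⟩
        rw [hp, gmap_of_inv T q hqi]
        exact ⟨φ, lam, ⟨p.1, a, φ, lam, q.1, he, Or.inr ⟨hpi, hpni, rfl⟩⟩, hg, hq2, hqi⟩
      · rw [hp]
        rintro ⟨φ, lam, he, hg, hq2, hqi⟩
        obtain ⟨l', hm, he'⟩ := edge_inr T he
        have hq1 : q.1 = l' := gmap_fst_inl T q hm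
        rw [gmap_snd] at hq2
        rw [hm] at hqi
        rw [gmap_snd] at hqi
        exact ⟨φ, lam, hq1 ▸ he', hg, hq2, hq1 ▸ hqi⟩
    | inr δ =>
      constructor
      · rintro ⟨_, _, _, hinv⟩
        have := hinv 0 zero_le
        rw [shift_zero, hpz] at this
        exact absurd this hpni
      · rw [hp]
        rintro ⟨hu, _, _, _⟩
        exact absurd (inr_urgent T hpi hpni) hu

lemma gmap_init {L A C : Type} (T : TA L A C) :
    gmap T '' T.initStates = (PUR T).initStates := by
  ext m
  constructor
  · rintro ⟨⟨l, ν⟩, ⟨hl, hν⟩, rfl⟩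
    dsimp only at hl hν
    subst hν
    by_cases hi : T.inv l zeroVal
    · rw [gmap_of_inv T (l, zeroVal) hi]
      exact ⟨Or.inl ⟨l, ⟨hl, hi⟩, rfl⟩, rfl⟩
    · rw [show gmap T (l, zeroVal) = (Sum.inr l, zeroVal) from if_pos ⟨⟨hl, hi⟩, rfl⟩]
      exact ⟨Or.inr ⟨l, ⟨hl, hi⟩, rfl⟩, rfl⟩
  · rintro ⟨hm1, hm2⟩
    rcases hm1 with ⟨l, ⟨hl, hi⟩, hml⟩ | ⟨l, ⟨hl, hi⟩, hml⟩
    · refine ⟨(l, zeroVal), ⟨hl, rfl⟩, ?_⟩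
      rw [gmap_of_inv T (l, zeroVal) hi]
      exact Prod.ext_iff.mpr ⟨hml, hm2.symm⟩
    · refine ⟨(l, zeroVal), ⟨hl, rfl⟩, ?_⟩
      rw [show gmap T (l, zeroVal) = (Sum.inr l, zeroVal) from if_pos ⟨⟨hl, hi⟩, rfl⟩]
      exact Prod.ext_iff.mpr ⟨hml, hm2.symm⟩

lemma surj_succ {L A C : Type} (T : TA L A C) (p : State L C) (α : A ⊕ NNReal)
    (m' : State (L ⊕ L) C) (h : TS (PUR T) (gmap T p) α m') :
    ∃ q : State L C, gmap T q = m' := by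
  cases α with
  | inl a =>
    obtain ⟨φ, lam, he, hg, hm2, hmi⟩ := h
    rcases gmap_cases T p with hp | ⟨hp, _, _, _⟩ <;> rw [hp] at he
    · obtain ⟨l', hm, _⟩ := edge_inl T he
      refine ⟨(l', m'.2), ?_⟩
      rw [hm] at hmi
      rw [gmap_of_inv T (l', m'.2) hmi]
      exact Prod.ext_iff.mpr ⟨hm.symm, rfl⟩
    · obtain ⟨l', hm, _⟩ := edge_inr T he
      refine ⟨(l', m'.2), ?_⟩
      rw [hm] at hmi
      rw [gmap_of_inv T (l', m'.2) hmi]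
      exact Prod.ext_iff.mpr ⟨hm.symm, rfl⟩
  | inr δ =>
    obtain ⟨hu, hm1, hm2, hinv⟩ := h
    rcases gmap_cases T p with hp | ⟨hp, hpi, hpni, _⟩
    · rw [hp] at hu hm1 hm2 hinv
      have hqi : T.inv p.1 (shift p.2 δ) := hinv δ le_rfl
      refine ⟨(p.1, shift p.2 δ), ?_⟩
      rw [gmap_of_inv T (p.1, shift p.2 δ) hqi]
      exact Prod.ext_iff.mpr ⟨hm1.symm, hm2.symm⟩
    · rw [hp] at hu
      exact absurd (inr_urgent T hpi hpni) hu

/-- the reachable subsystems of `TS(TA)` and `TS(PUR(TA))` are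
isomorphic: there is a bijection `g` from the reachable states of `TS(TA)`
onto the reachable states of `TS(PUR(TA))` mapping initial states exactly onto
initial states and such that for all reachable `q, q'` and labels `α`,
`q →α q'` in `TS(TA)` iff `g q →α g q'` in `TS(PUR(TA))`. -/
theorem statement_11 {L A C : Type} [Fintype L] [Fintype A] [Fintype C] [Nonempty C]
    (T : TA L A C) :
    ∃ g : State L C → State (L ⊕ L) C,
      Set.InjOn g {p | Reachable T.initStates (TS T) p} ∧
      g '' {p | Reachable T.initStates (TS T) p} =
        {q | Reachable (PUR T).initStates (TS (PUR T)) q} ∧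
      g '' T.initStates = (PUR T).initStates ∧
      (∀ p q, Reachable T.initStates (TS T) p → Reachable T.initStates (TS T) q →
        ∀ α : A ⊕ NNReal, TS T p α q ↔ TS (PUR T) (g p) α (g q)) := by
  refine ⟨gmap T, (gmap_injective T).injOn, ?_, gmap_init T, fun p q _ _ α => trans_iff T p q α⟩
  ext m
  constructor
  · rintro ⟨p, hp, rfl⟩
    simp only [Set.mem_setOf_eq] at hp ⊢
    induction hp with
    | base h => exact .base (gmap_init T ▸ Set.mem_image_of_mem _ h)
    | step h ht ih => exact .step ih ((trans_iff T _ _ _).mp ht)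
  · intro hm
    simp only [Set.mem_setOf_eq] at hm
    have : ∃ p, Reachable T.initStates (TS T) p ∧ gmap T p = m := by
      induction hm with
      | base h =>
        rw [← gmap_init] at h
        obtain ⟨p, hp, rfl⟩ := h
        exact ⟨p, .base hp, rfl⟩
      | step h ht ih =>
        obtain ⟨p, hp, rfl⟩ := ih
        obtain ⟨q, rfl⟩ := surj_succ T p _ _ ht
        exact ⟨q, .step hp ((trans_iff T _ _ _).mpr ht), rfl⟩
    obtain ⟨p, hp, rfl⟩ := this
    exact Set.mem_image_of_mem _ hp
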